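/- Fix β > 1 and let λ ∈ (0,1) satisfy λ − λ·ln λ < (β−1)²/β³ and λ < 1/β. Then for every integer n ≥ −log_β λ, the full words satisfy #Ξ_n(β) ≥ λ·#Σ_n(β); that is, full cylinders occupy proportion at least λ among all cylinders of order n. -/

import Mathlib

open MeasureTheory Set
open scoped Classical

/-- The beta-transformation `T_β x = βx - ⌊βx⌋`. -/
noncomputable def betaT (β x : ℝ) : ℝ := Int.fract (β * x)

/-- The `k`-th digit (0-indexed) of the β-expansion of `x`: `ε_{k+1}(x,β) = ⌊β T_β^k x⌋`. -/
noncomputable def betaDigit (β x : ℝ) (k : ℕ) : ℕ := ⌊β * (betaT β)^[k] x⌋₊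

/-- `Σ_n(β)`: admissible words of length `n`, i.e. prefixes of β-expansions of points of `[0,1)`. -/
def admWords (β : ℝ) (n : ℕ) : Set (Fin n → ℕ) :=
  {w | ∃ x ∈ Set.Ico (0:ℝ) 1, ∀ i : Fin n, w i = betaDigit β x i}

/-- The cylinder `𝔍(w)` of points of `[0,1)` whose β-expansion starts with `w`. -/
def cyl (β : ℝ) {n : ℕ} (w : Fin n → ℕ) : Set ℝ :=
  {x | x ∈ Set.Ico (0:ℝ) 1 ∧ ∀ i : Fin n, betaDigit β x i = w i}

/-- `Ξ_n(β)`: admissible words of length `n` whose cylinder is full (of length `β^{-n}`). -/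
def fullWords (β : ℝ) (n : ℕ) : Set (Fin n → ℕ) :=
  {w | w ∈ admWords β n ∧ volume (cyl β w) = ENNReal.ofReal (1 / β ^ n)}

/-- `ε(β)`: the β-expansion of 1 (0-indexed). -/
noncomputable def eps1 (β : ℝ) (k : ℕ) : ℕ := betaDigit β 1 k

/-- `ε*(β)`: the infinite β-expansion of 1.  If `ε(β)` has a last nonzero digit at
(0-indexed) position `N`, it is the periodic sequence `(ε_0 ⋯ ε_{N-1} (ε_N - 1))^∞`;
otherwise it is `ε(β)` itself. -/

noncomputable def epsStar (β : ℝ) : ℕ → ℕ :=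
  if h : ∃ N, eps1 β N ≠ 0 ∧ ∀ k, N < k → eps1 β k = 0 then
    fun k => if k % (h.choose + 1) = h.choose then eps1 β h.choose - 1
             else eps1 β (k % (h.choose + 1))
  else eps1 β

/-- Strict lexicographic order on sequences of nonnegative integers. -/
def lexLt (a b : ℕ → ℕ) : Prop := ∃ i, (∀ j, j < i → a j = b j) ∧ a i < b i

/-- Strict lexicographic order on words of length `n`. -/
def wordLt {n : ℕ} (a b : Fin n → ℕ) : Prop :=
  ∃ i : Fin n, (∀ j, j < i → a j = b j) ∧ a i < b i

/-- `Ω_n(x)`: all length-`n` prefixes of β-expansions of `x` over all bases `β > 1`. -/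
def prefWords (x : ℝ) (n : ℕ) : Set (Fin n → ℕ) :=
  {w | ∃ β : ℝ, 1 < β ∧ ∀ i : Fin n, w i = betaDigit β x i}

/-- The parameter cylinder `I(w) = {β > 1 : ε_1(x,β)⋯ε_n(x,β) = w}`. -/
def pcyl (x : ℝ) {n : ℕ} (w : Fin n → ℕ) : Set ℝ :=
  {β | 1 < β ∧ ∀ i : Fin n, betaDigit β x i = w i}

/-- `Λ_n(x)`: words whose parameter cylinder is full, i.e. `{T_β^n x : β ∈ I(w)} = [0,1)`. -/
def pfull (x : ℝ) (n : ℕ) : Set (Fin n → ℕ) :=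
  {w | w ∈ prefWords x n ∧ (fun β => (betaT β)^[n] x) '' pcyl x w = Set.Ico (0:ℝ) 1}

open scoped ENNReal

namespace BetaDev

lemma fract_eq (y : ℝ) (hy : 0 ≤ y) : Int.fract y = y - (⌊y⌋₊ : ℝ) := by
  rw [Int.fract, ← Int.floor_toNat, ← Int.cast_natCast,
    Int.toNat_of_nonneg (Int.floor_nonneg.2 hy)]

noncomputable def Cv (β : ℝ) (v : ℕ → ℕ) : ℕ → ℝ
  | 0 => 0
  | k+1 => β * Cv β v k + v k

def extw {n : ℕ} (w : Fin n → ℕ) : ℕ → ℕ := fun i => if h : i < n then w ⟨i, h⟩ else 0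

lemma Cv_congr {β : ℝ} {v v' : ℕ → ℕ} : ∀ {k}, (∀ i < k, v i = v' i) → Cv β v k = Cv β v' k
  | 0, _ => rfl
  | (k+1), h => by
      rw [Cv, Cv, Cv_congr (fun i hi => h i (Nat.lt_succ_of_lt hi)), h k (Nat.lt_succ_self k)]

lemma Cv_nonneg {β : ℝ} (hβ : 0 ≤ β) (v : ℕ → ℕ) : ∀ k, 0 ≤ Cv β v k
  | 0 => le_refl 0
  | (k+1) => add_nonneg (mul_nonneg hβ (Cv_nonneg hβ v k)) (Nat.cast_nonneg _)

lemma iter_mem {β x : ℝ} (hx : x ∈ Set.Ico (0:ℝ) 1) (k : ℕ) :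
    (betaT β)^[k] x ∈ Set.Ico (0:ℝ) 1 := by
  induction k with
  | zero => exact hx
  | succ k ih =>
    rw [Function.iterate_succ_apply']
    exact ⟨Int.fract_nonneg _, Int.fract_lt_one _⟩

lemma iter_eq {β : ℝ} (hβ : 0 < β) {x : ℝ} (hx : x ∈ Set.Ico (0:ℝ) 1) :
    ∀ k, (betaT β)^[k] x = β^k * x - Cv β (betaDigit β x) k
  | 0 => by simp [Cv]
  | (k+1) => by
    have ih := iter_eq hβ hx k
    have hmem := iter_mem (β := β) hx k
    have h0 : 0 ≤ β * (betaT β)^[k] x := mul_nonneg hβ.le hmem.1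
    rw [Function.iterate_succ_apply', betaT, fract_eq _ h0,
      show (⌊β * (betaT β)^[k] x⌋₊ : ℕ) = betaDigit β x k from rfl, Cv, ih, pow_succ]
    ring

lemma mem_cyl_iff {β : ℝ} (hβ : 1 < β) {n : ℕ} (w : Fin n → ℕ) (x : ℝ) :
    x ∈ cyl β w ↔ ∀ k ≤ n, β^k * x - Cv β (extw w) k ∈ Set.Ico (0:ℝ) 1 := by
  have hβ0 : (0:ℝ) < β := lt_trans one_pos hβ
  constructor
  · rintro ⟨hx, hd⟩ k hk
    have hC : Cv β (extw w) k = Cv β (betaDigit β x) k := by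
      apply Cv_congr
      intro i hi
      have hin : i < n := lt_of_lt_of_le hi hk
      simp only [extw, dif_pos hin]
      exact (hd ⟨i, hin⟩).symm
    rw [hC, ← iter_eq hβ0 hx k]
    exact iter_mem hx k
  · intro h
    have hx : x ∈ Set.Ico (0:ℝ) 1 := by simpa [Cv] using h 0 (Nat.zero_le n)
    have key : ∀ k, k ≤ n → ∀ i, i < k → betaDigit β x i = extw w i := by
      intro k
      induction k with
      | zero => intro _ i hi; omega
      | succ k ih =>
        intro hk i hi
        have hk' : k ≤ n := Nat.le_of_succ_le hk
        have ihk := ih hk'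
        rcases Nat.lt_or_ge i k with h' | h'
        · exact ihk i h'
        · have hik : i = k := by omega
          subst hik
          have hCv : Cv β (betaDigit β x) i = Cv β (extw w) i := Cv_congr ihk
          have hTk : (betaT β)^[i] x = β^i * x - Cv β (extw w) i := by
            rw [iter_eq hβ0 hx i, hCv]
          have hmem := h (i+1) hk
          rw [Cv] at hmem
          have hy : 0 ≤ β * (betaT β)^[i] x := mul_nonneg hβ0.le (iter_mem hx i).1
          have hbt : β * (betaT β)^[i] x = β^(i+1) * x - β * Cv β (extw w) i := by
            rw [hTk, pow_succ]; ring
          rw [betaDigit, Nat.floor_eq_iff hy]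
          constructor
          · rw [hbt]
            have := hmem.1
            simp only [Set.mem_Ico] at hmem
            linarith [hmem.1]
          · rw [hbt]
            simp only [Set.mem_Ico] at hmem
            linarith [hmem.2]
    constructor
    · exact hx
    · intro i
      have := key n le_rfl i i.isLt
      rw [this]
      simp [extw, i.isLt]

end BetaDev

namespace BetaDev

variable {β : ℝ} {n : ℕ}

/-- Right endpoint of the cylinder. -/
noncomputable def Rw (β : ℝ) {n : ℕ} (w : Fin n → ℕ) : ℝ :=
  (Finset.range (n+1)).inf' (by simp) (fun k => (Cv β (extw w) k + 1)/β^k)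

/-- Left endpoint of the cylinder. -/
noncomputable def Lw (β : ℝ) {n : ℕ} (w : Fin n → ℕ) : ℝ := Cv β (extw w) n / β^n

lemma Cv_div_mono (hβ : 1 < β) (v : ℕ → ℕ) {k l : ℕ} (hkl : k ≤ l) :
    Cv β v k / β^k ≤ Cv β v l / β^l := by
  have hβ0 : (0:ℝ) < β := lt_trans one_pos hβ
  obtain ⟨j, rfl⟩ := Nat.exists_eq_add_of_le hkl
  induction j with
  | zero => simp
  | succ j ih =>
    refine le_trans (ih (Nat.le_add_right _ _)) ?_
    rw [div_le_div_iff₀ (by positivity) (by positivity)]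
    have : Cv β v (k + (j+1)) = β * Cv β v (k+j) + v (k+j) := rfl
    rw [show k + (j+1) = (k+j)+1 from rfl, Cv, pow_succ]
    have h1 : (0:ℝ) ≤ (v (k+j) : ℝ) := Nat.cast_nonneg _
    have h2 : (0:ℝ) ≤ β^(k+j) := by positivity
    nlinarith [Cv_nonneg hβ0.le v (k+j)]

lemma Rw_le (hβ : 1 < β) (w : Fin n → ℕ) {k : ℕ} (hk : k ≤ n) :
    Rw β w ≤ (Cv β (extw w) k + 1)/β^k :=
  Finset.inf'_le _ (Finset.mem_range.2 (Nat.lt_succ_of_le hk))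

lemma cyl_eq_Ico (hβ : 1 < β) (w : Fin n → ℕ) :
    cyl β w = Set.Ico (Lw β w) (Rw β w) := by
  have hβ0 : (0:ℝ) < β := lt_trans one_pos hβ
  ext x
  rw [mem_cyl_iff hβ w x, Set.mem_Ico]
  constructor
  · intro h
    constructor
    · have := (h n le_rfl).1
      rw [Lw, div_le_iff₀ (by positivity), mul_comm]
      linarith [(h n le_rfl).1]
    · rw [Rw, Finset.lt_inf'_iff]
      intro k hk
      have hk' : k ≤ n := Nat.lt_succ_iff.1 (Finset.mem_range.1 hk)
      have := (h k hk').2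
      rw [lt_div_iff₀ (by positivity : (0:ℝ) < β^k), mul_comm]
      linarith
  · rintro ⟨h1, h2⟩ k hk
    constructor
    · have hL : Cv β (extw w) k / β^k ≤ x := le_trans (Cv_div_mono hβ _ hk) h1
      rw [div_le_iff₀ (by positivity : (0:ℝ) < β^k)] at hL
      nlinarith
    · have hR : x < (Cv β (extw w) k + 1)/β^k := lt_of_lt_of_le h2 (Rw_le hβ w hk)
      rw [lt_div_iff₀ (by positivity : (0:ℝ) < β^k)] at hR
      nlinarith

lemma volume_cyl (hβ : 1 < β) (w : Fin n → ℕ) :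
    volume (cyl β w) = ENNReal.ofReal (Rw β w - Lw β w) := by
  rw [cyl_eq_Ico hβ w, Real.volume_Ico]

lemma Rw_sub_Lw_le (hβ : 1 < β) (w : Fin n → ℕ) : Rw β w - Lw β w ≤ 1/β^n := by
  have := Rw_le hβ w (le_refl n)
  rw [Lw]
  have hb : (0:ℝ) < β^n := by positivity
  rw [add_div] at this
  linarith

lemma adm_iff (hβ : 1 < β) (w : Fin n → ℕ) :
    w ∈ admWords β n ↔ Lw β w < Rw β w := by
  constructor
  · rintro ⟨x, hx, hd⟩
    have : x ∈ cyl β w := ⟨hx, fun i => (hd i).symm⟩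
    rw [cyl_eq_Ico hβ w] at this
    exact lt_of_le_of_lt this.1 this.2
  · intro h
    have : (Set.Ico (Lw β w) (Rw β w)).Nonempty := Set.nonempty_Ico.2 h
    obtain ⟨x, hx⟩ := this
    rw [← cyl_eq_Ico hβ w] at hx
    exact ⟨x, hx.1, fun i => (hx.2 i).symm⟩

lemma full_iff (hβ : 1 < β) (w : Fin n → ℕ) :
    w ∈ fullWords β n ↔ Lw β w < Rw β w ∧ Rw β w = (Cv β (extw w) n + 1)/β^n := by
  have hb : (0:ℝ) < β^n := by positivity
  rw [fullWords, Set.mem_setOf_eq, adm_iff hβ w, volume_cyl hβ w]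
  constructor
  · rintro ⟨h1, h2⟩
    refine ⟨h1, ?_⟩
    rw [ENNReal.ofReal_eq_ofReal_iff (by linarith) (by positivity)] at h2
    rw [Lw] at h2
    rw [add_div]
    linarith
  · rintro ⟨h1, h2⟩
    refine ⟨h1, ?_⟩
    congr 1
    rw [h2, Lw, add_div]
    ring

end BetaDev

namespace BetaDev

variable {β : ℝ} {n : ℕ}

lemma finite_adm (hβ : 1 < β) (n : ℕ) : (admWords β n).Finite := by
  have hβ0 : (0:ℝ) < β := lt_trans one_pos hβ
  apply Set.Finite.subset (Set.Finite.pi (fun _ : Fin n => Set.finite_Iic ⌊β⌋₊))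
  rintro w ⟨x, hx, hd⟩ i _
  simp only [Set.mem_Iic]
  rw [hd i]
  apply Nat.floor_le_floor
  have := iter_mem (β := β) hx (i : ℕ)
  nlinarith [this.1, this.2]

lemma full_subset_adm : fullWords β n ⊆ admWords β n := fun _ h => h.1

lemma finite_full (hβ : 1 < β) (n : ℕ) : (fullWords β n).Finite :=
  (finite_adm hβ n).subset full_subset_adm

lemma cyl_disjoint {w w' : Fin n → ℕ} (h : w ≠ w') : Disjoint (cyl β w) (cyl β w') := by
  rw [Set.disjoint_left]
  rintro x ⟨hx, hd⟩ ⟨hx', hd'⟩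
  exact h (funext fun i => (hd i).symm.trans (hd' i))

lemma cyl_subset_Ico (w : Fin n → ℕ) : cyl β w ⊆ Set.Ico (0:ℝ) 1 := fun _ h => h.1

lemma a_lower (hβ : 1 < β) (n : ℕ) : β^n ≤ ((admWords β n).ncard : ℝ) := by
  have hβ0 : (0:ℝ) < β := lt_trans one_pos hβ
  have hbn : (0:ℝ) < β^n := by positivity
  set F := (finite_adm hβ n).toFinset with hF
  have hcover : Set.Ico (0:ℝ) 1 ⊆ ⋃ w ∈ F, cyl β w := by
    intro x hx
    have hadm : (fun i : Fin n => betaDigit β x i) ∈ admWords β n := ⟨x, hx, fun _ => rfl⟩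
    refine Set.mem_biUnion ((finite_adm hβ n).mem_toFinset.2 hadm) ⟨hx, fun _ => rfl⟩
  have h1 : (1:ℝ≥0∞) ≤ volume (⋃ w ∈ F, cyl β w) := by
    calc (1:ℝ≥0∞) = volume (Set.Ico (0:ℝ) 1) := by simp
    _ ≤ _ := measure_mono hcover
  have h2 : volume (⋃ w ∈ F, cyl β w) ≤ ∑ w ∈ F, volume (cyl β w) :=
    measure_biUnion_finset_le F _
  have h3 : ∑ w ∈ F, volume (cyl β w) ≤ F.card • ENNReal.ofReal (1/β^n) := by
    apply Finset.sum_le_card_nsmul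
    intro w _
    rw [volume_cyl hβ w]
    exact ENNReal.ofReal_le_ofReal (Rw_sub_Lw_le hβ w)
  have h4 : (1:ℝ≥0∞) ≤ ENNReal.ofReal (F.card * (1/β^n)) := by
    calc (1:ℝ≥0∞) ≤ F.card • ENNReal.ofReal (1/β^n) := le_trans h1 (le_trans h2 h3)
    _ = ENNReal.ofReal (F.card * (1/β^n)) := by
        rw [nsmul_eq_mul, ← ENNReal.ofReal_natCast F.card,
          ← ENNReal.ofReal_mul (by positivity)]
  rw [ENNReal.one_le_ofReal] at h4
  have hcard : (admWords β n).ncard = F.card :=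
    Set.ncard_eq_toFinset_card _ (finite_adm hβ n)
  rw [hcard]
  rw [mul_one_div, le_div_iff₀ hbn, one_mul] at h4
  exact h4

lemma b_upper (hβ : 1 < β) (n : ℕ) : ((fullWords β n).ncard : ℝ) ≤ β^n := by
  have hβ0 : (0:ℝ) < β := lt_trans one_pos hβ
  have hbn : (0:ℝ) < β^n := by positivity
  set G := (finite_full hβ n).toFinset with hG
  have hdisj : (G : Set (Fin n → ℕ)).PairwiseDisjoint (fun w => cyl β w) := by
    intro w _ w' _ hne
    exact cyl_disjoint hne
  have hmeas : ∀ w ∈ G, MeasurableSet (cyl β w) := by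
    intro w _
    rw [cyl_eq_Ico hβ w]
    exact measurableSet_Ico
  have heq : ∑ w ∈ G, volume (cyl β w) = volume (⋃ w ∈ G, cyl β w) :=
    (measure_biUnion_finset hdisj hmeas).symm
  have hle : volume (⋃ w ∈ G, cyl β w) ≤ volume (Set.Ico (0:ℝ) 1) :=
    measure_mono (Set.iUnion₂_subset fun w _ => cyl_subset_Ico w)
  have hvol : ∀ w ∈ G, volume (cyl β w) = ENNReal.ofReal (1/β^n) := by
    intro w hw
    exact ((finite_full hβ n).mem_toFinset.1 hw).2
  rw [Finset.sum_congr rfl hvol, Finset.sum_const] at heq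
  have key : (G.card : ℝ≥0∞) * ENNReal.ofReal (1/β^n) ≤ ENNReal.ofReal 1 := by
    rw [← nsmul_eq_mul, heq]
    refine le_trans hle ?_
    simp
  rw [← ENNReal.ofReal_natCast G.card, ← ENNReal.ofReal_mul (by positivity),
    ENNReal.ofReal_le_ofReal_iff (by norm_num)] at key
  have hcard : (fullWords β n).ncard = G.card :=
    Set.ncard_eq_toFinset_card _ (finite_full hβ n)
  rw [hcard]
  rw [mul_one_div, div_le_one hbn] at key
  exact key

end BetaDev

namespace BetaDev

variable {β : ℝ} {n : ℕ}

lemma extw_snoc_zero (w : Fin n → ℕ) : extw (Fin.snoc w 0 : Fin (n+1) → ℕ) = extw w := by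
  funext i
  simp only [extw]
  rcases lt_trichotomy i n with h|h|h
  · rw [dif_pos (by omega : i < n + 1), dif_pos h]
    have he : (⟨i, by omega⟩ : Fin (n+1)) = Fin.castSucc ⟨i, h⟩ := rfl
    rw [he, Fin.snoc_castSucc]
  · subst h
    rw [dif_pos (by omega : i < i + 1), dif_neg (lt_irrefl i)]
    have he : (⟨i, by omega⟩ : Fin (i+1)) = Fin.last i := rfl
    rw [he, Fin.snoc_last]
  · rw [dif_neg (by omega), dif_neg (by omega)]

lemma extw_last (w : Fin (n+1) → ℕ) : extw w n = w (Fin.last n) := by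
  simp only [extw, dif_pos (Nat.lt_succ_self n)]
  rfl

lemma Cv_succ_top (w : Fin (n+1) → ℕ) :
    Cv β (extw w) (n+1) = β * Cv β (extw w) n + (w (Fin.last n) : ℝ) := by
  rw [Cv, extw_last]

lemma full_snoc (hβ : 1 < β) {w : Fin n → ℕ} (hw : w ∈ fullWords β n) :
    (Fin.snoc w 0 : Fin (n+1) → ℕ) ∈ fullWords β (n+1) := by
  have hβ0 : (0:ℝ) < β := lt_trans one_pos hβ
  rw [full_iff hβ] at hw ⊢
  obtain ⟨hw1, hw2⟩ := hw
  have hC : Cv β (extw (Fin.snoc w 0 : Fin (n+1) → ℕ)) = Cv β (extw w) := by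
    rw [extw_snoc_zero]
  have hCn1 : Cv β (extw (Fin.snoc w 0 : Fin (n+1) → ℕ)) (n+1) = β * Cv β (extw w) n := by
    rw [Cv_succ_top, hC]
    simp [Fin.snoc_last]
  have hR : Rw β (Fin.snoc w 0 : Fin (n+1) → ℕ)
      = (Cv β (extw (Fin.snoc w 0 : Fin (n+1) → ℕ)) (n+1) + 1)/β^(n+1) := by
    apply le_antisymm (Rw_le hβ _ le_rfl)
    rw [Rw, Finset.le_inf'_iff]
    intro k hk
    have hk' : k ≤ n + 1 := Nat.lt_succ_iff.1 (Finset.mem_range.1 hk)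
    rcases Nat.lt_or_ge k (n+1) with hkn | hkn
    · have hkn' : k ≤ n := Nat.lt_succ_iff.1 hkn
      have h1 : Rw β w ≤ (Cv β (extw w) k + 1)/β^k := Rw_le hβ w hkn'
      rw [hw2] at h1
      have hCn1' : Cv β (extw w) (n+1) = β * Cv β (extw w) n := by
        rw [Cv]; simp [extw]
      rw [hC, hCn1']
      refine le_trans ?_ h1
      rw [div_le_div_iff₀ (by positivity) (by positivity), pow_succ]
      have h2 : (0:ℝ) ≤ Cv β (extw w) n := Cv_nonneg hβ0.le _ n
      have h3 : (0:ℝ) < β^n := by positivity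
      nlinarith
    · have : k = n + 1 := by omega
      subst this
      rw [hC]
  refine ⟨?_, hR⟩
  rw [Lw, hR, hCn1]
  rw [div_lt_div_iff₀ (by positivity) (by positivity)]
  nlinarith [pow_pos hβ0 (n+1)]
lemma b_mono (hβ : 1 < β) {m k : ℕ} (h : m ≤ k) :
    (fullWords β m).ncard ≤ (fullWords β k).ncard := by
  induction k, h using Nat.le_induction with
  | base => exact le_rfl
  | succ k hk ih =>
    refine le_trans ih ?_
    refine Set.ncard_le_ncard_of_injOn (fun w => (Fin.snoc w 0 : Fin (k+1) → ℕ))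
      (fun w hw => full_snoc hβ hw) ?_ (finite_full hβ (k+1))
    intro w _ w' _ h
    funext i
    have := congrFun h (Fin.castSucc i)
    simpa [Fin.snoc_castSucc] using this

lemma init_adm {w : Fin (n+1) → ℕ} (hw : w ∈ admWords β (n+1)) :
    Fin.init w ∈ admWords β n := by
  obtain ⟨x, hx, hd⟩ := hw
  exact ⟨x, hx, fun i => by simpa [Fin.init] using hd (Fin.castSucc i)⟩

lemma full_of_lt (hβ : 1 < β) {w w' : Fin (n+1) → ℕ} (hw : w ∈ admWords β (n+1))
    (hw' : w' ∈ admWords β (n+1)) (hinit : Fin.init w = Fin.init w')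
    (hlt : w (Fin.last n) < w' (Fin.last n)) : w ∈ fullWords β (n+1) := by
  have hβ0 : (0:ℝ) < β := lt_trans one_pos hβ
  rw [full_iff hβ]
  have hadm := (adm_iff hβ w).1 hw
  refine ⟨hadm, ?_⟩
  apply le_antisymm (Rw_le hβ w le_rfl)
  rw [Rw, Finset.le_inf'_iff]
  intro k hk
  have hk' : k ≤ n+1 := Nat.lt_succ_iff.1 (Finset.mem_range.1 hk)
  rcases Nat.lt_or_ge k (n+1) with hkn | hkn
  · have hkn' : k ≤ n := Nat.lt_succ_iff.1 hkn
    have hagree : ∀ i, i < n → extw w' i = extw w i := by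
      intro i hi
      simp only [extw, dif_pos (show i < n+1 by omega)]
      have := congrFun hinit ⟨i, hi⟩
      simp only [Fin.init] at this
      exact this.symm
    have hCeq : Cv β (extw w') k = Cv β (extw w) k :=
      Cv_congr (fun i hi => hagree i (lt_of_lt_of_le hi hkn'))
    have hCeqn : Cv β (extw w') n = Cv β (extw w) n :=
      Cv_congr (fun i hi => hagree i hi)
    have hadm' := (adm_iff hβ w').1 hw'
    have hL' : Cv β (extw w') (n+1) / β^(n+1) < (Cv β (extw w') k + 1)/β^k :=
      lt_of_lt_of_le hadm' (Rw_le hβ w' hk')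
    have hCn : Cv β (extw w) (n+1) + 1 ≤ Cv β (extw w') (n+1) := by
      rw [Cv_succ_top, Cv_succ_top, hCeqn]
      have hcast : (w (Fin.last n) : ℝ) + 1 ≤ (w' (Fin.last n) : ℝ) := by
        exact_mod_cast hlt
      linarith
    have : (Cv β (extw w) (n+1) + 1)/β^(n+1) < (Cv β (extw w) k + 1)/β^k := by
      calc (Cv β (extw w) (n+1) + 1)/β^(n+1) ≤ Cv β (extw w') (n+1)/β^(n+1) := by gcongr
      _ < (Cv β (extw w') k + 1)/β^k := hL'
      _ = (Cv β (extw w) k + 1)/β^k := by rw [hCeq]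
    exact le_of_lt this
  · have : k = n+1 := by omega
    subst this
    exact le_rfl

lemma step_card (hβ : 1 < β) (n : ℕ) :
    (admWords β (n+1)).ncard ≤ (admWords β n).ncard + (fullWords β (n+1)).ncard := by
  have h1 : (admWords β (n+1) \ fullWords β (n+1)).ncard + (fullWords β (n+1)).ncard
      = (admWords β (n+1)).ncard :=
    Set.ncard_diff_add_ncard_of_subset full_subset_adm (finite_adm hβ (n+1))
  have h2 : (admWords β (n+1) \ fullWords β (n+1)).ncard ≤ (admWords β n).ncard := by
    refine Set.ncard_le_ncard_of_injOn Fin.init ?_ ?_ (finite_adm hβ n)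
    · rintro w ⟨hw, _⟩; exact init_adm hw
    · rintro w ⟨hw, hwf⟩ w' ⟨hw', hwf'⟩ h
      rcases lt_trichotomy (w (Fin.last n)) (w' (Fin.last n)) with hlt|heq|hlt
      · exact absurd (full_of_lt hβ hw hw' h hlt) hwf
      · conv_lhs => rw [← Fin.snoc_init_self w]
        conv_rhs => rw [← Fin.snoc_init_self w']
        rw [h, heq]
      · exact absurd (full_of_lt hβ hw' hw h.symm hlt) hwf'
  omega

lemma a_zero : (admWords β 0).ncard = 1 := by
  have : admWords β 0 = Set.univ := by
    ext w
    simp only [admWords, Set.mem_setOf_eq, Set.mem_univ, iff_true]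
    exact ⟨0, by norm_num, fun i => i.elim0⟩
  rw [this, Set.ncard_univ]
  simp

end BetaDev

namespace BetaDev

variable {β : ℝ}

lemma a_upper (hβ : 1 < β) (m : ℕ) : ((admWords β m).ncard : ℝ) ≤ β^(m+1)/(β-1) := by
  have hb1 : (0:ℝ) < β - 1 := by linarith
  induction m with
  | zero =>
    rw [a_zero, le_div_iff₀ hb1]
    have : β^(0+1) = β := pow_one β
    rw [this]
    norm_num
  | succ m ih =>
    have h1 := step_card hβ m
    have h2 := b_upper hβ (m+1)
    have h3 : ((admWords β (m+1)).ncard : ℝ)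
        ≤ (admWords β m).ncard + (fullWords β (m+1)).ncard := by exact_mod_cast h1
    have h4 : β^(m+1)/(β-1) + β^(m+1) = β^(m+1+1)/(β-1) := by
      field_simp
      ring
    linarith

lemma telescope (hβ : 1 < β) {m i nn : ℕ} (h : m + i ≤ nn) :
    ((admWords β (m+i)).ncard : ℝ)
      ≤ ((admWords β m).ncard : ℝ) + i * ((fullWords β nn).ncard : ℝ) := by
  induction i with
  | zero => simp
  | succ i ih =>
    have h' : m + i ≤ nn := by omega
    have hstep := step_card hβ (m+i)
    have hmono := b_mono hβ (show m+i+1 ≤ nn by omega)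
    have c1 : ((admWords β (m+i+1)).ncard : ℝ)
        ≤ (admWords β (m+i)).ncard + (fullWords β (m+i+1)).ncard := by exact_mod_cast hstep
    have c2 : ((fullWords β (m+i+1)).ncard : ℝ) ≤ (fullWords β nn).ncard := by
      exact_mod_cast hmono
    have c3 := ih h'
    have he : m + (i+1) = m + i + 1 := rfl
    rw [he]
    push_cast
    push_cast at c3
    linarith

end BetaDev

set_option maxHeartbeats 1000000 in
theorem fullWords_proportion (β : ℝ) (hβ : 1 < β) (lam : ℝ)
    (hlam : lam ∈ Set.Ioo (0:ℝ) 1)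
    (h1 : lam - lam * Real.log lam < (β - 1) ^ 2 / β ^ 3) (h2 : lam < 1 / β)
    (n : ℕ) (hn : -Real.logb β lam ≤ (n : ℝ)) :
    lam * ((admWords β n).ncard : ℝ) ≤ ((fullWords β n).ncard : ℝ) := by
  classical
  obtain ⟨hl0, hl1⟩ := hlam
  have hβ0 : (0:ℝ) < β := lt_trans one_pos hβ
  have hb1 : (0:ℝ) < β - 1 := by linarith
  obtain ⟨L, hLdef⟩ : ∃ L : ℝ, L = Real.logb β lam⁻¹ := ⟨_, rfl⟩
  have hn' : L ≤ (n : ℝ) := by rw [hLdef, Real.logb_inv]; exact hn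
  have hβlam : β < lam⁻¹ := by
    rw [lt_inv_comm₀ hβ0 hl0]
    rw [one_div] at h2
    exact lt_of_le_of_lt (le_refl _) h2
  have hL1 : 1 < L := by
    rw [hLdef]
    calc (1:ℝ) = Real.logb β β := (Real.logb_self_eq_one hβ).symm
    _ < Real.logb β lam⁻¹ := Real.logb_lt_logb hβ hβ0 hβlam
  obtain ⟨j, hjdef⟩ : ∃ j : ℕ, j = ⌈L⌉₊ := ⟨_, rfl⟩
  have hjn : j ≤ n := by rw [hjdef]; exact Nat.ceil_le.2 hn'
  have hj1 : 1 ≤ j := by rw [hjdef]; exact Nat.ceil_pos.2 (by linarith)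
  have hjL : (j:ℝ) < L + 1 := by rw [hjdef]; exact Nat.ceil_lt_add_one (by linarith)
  have hLj : L ≤ (j:ℝ) := by rw [hjdef]; exact Nat.le_ceil L
  have hlamj : lam⁻¹ ≤ β^j := by
    have e1 : lam⁻¹ = β ^ L := by
      rw [hLdef]
      exact (Real.rpow_logb hβ0 (ne_of_gt hβ) (by positivity)).symm
    rw [e1, ← Real.rpow_natCast β j]
    exact Real.rpow_le_rpow_of_exponent_le (le_of_lt hβ) hLj
  obtain ⟨m, hmdef⟩ : ∃ m : ℕ, m = n - j := ⟨_, rfl⟩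
  have hmjn : m + j = n := by omega
  have htel : ((admWords β n).ncard : ℝ)
      ≤ ((admWords β m).ncard : ℝ) + j * ((fullWords β n).ncard : ℝ) := by
    have := BetaDev.telescope hβ (show m + j ≤ n by omega)
    rwa [hmjn] at this
  have ham : ((admWords β m).ncard : ℝ) ≤ β^(m+1)/(β-1) := BetaDev.a_upper hβ m
  have han : β^n ≤ ((admWords β n).ncard : ℝ) := BetaDev.a_lower hβ n
  -- key numeric inequality
  have hloglam : Real.log lam < 0 := Real.log_neg hl0 hl1
  have hlogβpos : 0 < Real.log β := Real.log_pos hβ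
  have hlogβ : (β-1)/β ≤ Real.log β := by
    have h := Real.log_le_sub_one_of_pos (show (0:ℝ) < β⁻¹ by positivity)
    rw [Real.log_inv] at h
    have : β⁻¹ = 1/β := (one_div β).symm
    rw [this] at h
    have h' : 1 - 1/β ≤ Real.log β := by linarith
    have : (β-1)/β = 1 - 1/β := by field_simp
    linarith
  have hLval : L = (- Real.log lam) / Real.log β := by
    rw [hLdef, Real.logb, Real.log_inv]
  have hlamc : lam < (β-1)^2/β^3 := by
    linarith [h1, mul_neg_of_pos_of_neg hl0 hloglam]
  have hkey : lam * j + β/((β-1)*β^j) ≤ 1 := by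
    have hbj : (0:ℝ) < β^j := by positivity
    have e1 : β/((β-1)*β^j) ≤ β*lam/(β-1) := by
      rw [div_le_div_iff₀ (by positivity) hb1]
      have hge : 1 ≤ lam * β^j := by
        have := mul_le_mul_of_nonneg_left hlamj hl0.le
        rwa [mul_inv_cancel₀ (ne_of_gt hl0)] at this
      calc β * (β-1) = β*(β-1)*1 := by ring
      _ ≤ β*(β-1)*(lam*β^j) := by
          apply mul_le_mul_of_nonneg_left hge
          nlinarith
      _ = β*lam*((β-1)*β^j) := by ring
    have e2 : lam * j ≤ lam * L + lam := by
      linarith [mul_le_mul_of_nonneg_left hjL.le hl0.le]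
    have e3 : lam * L ≤ (-(lam * Real.log lam)) * (β/(β-1)) := by
      have hnn : 0 ≤ -(lam * Real.log lam) :=
        neg_nonneg.2 (le_of_lt (mul_neg_of_pos_of_neg hl0 hloglam))
      have hinv : 1/Real.log β ≤ β/(β-1) := by
        rw [div_le_div_iff₀ hlogβpos hb1]
        have hid : β*((β-1)/β) = β-1 := by field_simp
        linarith [mul_le_mul_of_nonneg_left hlogβ hβ0.le]
      have heq : lam * L = (-(lam * Real.log lam)) * (1/Real.log β) := by
        rw [hLval]; ring
      rw [heq]
      exact mul_le_mul_of_nonneg_left hinv hnn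
    have e4 : (lam - lam * Real.log lam) * (β/(β-1)) < (β-1)^2/β^3 * (β/(β-1)) := by
      apply mul_lt_mul_of_pos_right h1
      positivity
    have e5 : (β-1)^2/β^3 * (β/(β-1)) = (β-1)/β^2 := by
      field_simp
    have e6 : (β-1)/β^2 + (β-1)^2/β^3 ≤ 1 := by
      rw [div_add_div _ _ (by positivity : (β:ℝ)^2 ≠ 0) (by positivity : (β:ℝ)^3 ≠ 0),
        div_le_one (by positivity)]
      nlinarith [mul_nonneg (mul_nonneg hβ0.le hβ0.le) (mul_nonneg hβ0.le (sq_nonneg (β-1))),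
        mul_pos (mul_pos hβ0 hβ0) (show (0:ℝ) < 2*β-1 by linarith)]
    refine le_of_lt ?_
    calc lam * ↑j + β/((β-1)*β^j)
        ≤ (lam * L + lam) + β*lam/(β-1) := add_le_add e2 e1
      _ ≤ (-(lam * Real.log lam) * (β/(β-1)) + lam) + β*lam/(β-1) := by linarith [e3]
      _ = (lam - lam * Real.log lam) * (β/(β-1)) + lam := by ring
      _ < (β-1)^2/β^3 * (β/(β-1)) + lam := by linarith [e4]
      _ = (β-1)/β^2 + lam := by rw [e5]
      _ < (β-1)/β^2 + (β-1)^2/β^3 := by linarith [hlamc]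
      _ ≤ 1 := e6

  -- conclude
  have hjpos : (0:ℝ) < (j:ℝ) := by exact_mod_cast hj1
  have hbn : (0:ℝ) < β^n := by positivity
  have hspos : (0:ℝ) < β/((β-1)*β^j) := by positivity
  have h1mlj : 0 ≤ 1 - lam * j := by linarith
  have hbj : (0:ℝ) < β^j := by positivity
  have hsn : β^n * (β/((β-1)*β^j)) = β^(m+1)/(β-1) := by
    have hpow : β^(n+1) = β^(m+1) * β^j := by
      rw [← pow_add]
      congr 1
      omega
    rw [mul_div_assoc', ← pow_succ, hpow, mul_comm (β-1) (β^j),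
      mul_comm (β^(m+1)) (β^j), mul_div_mul_left _ _ (ne_of_gt hbj)]
  have hamn : ((admWords β m).ncard : ℝ) ≤ (1 - lam * j) * ((admWords β n).ncard : ℝ) := by
    have s1 : β^n * (β/((β-1)*β^j)) ≤ β^n * (1 - lam * j) := by
      apply mul_le_mul_of_nonneg_left _ (le_of_lt hbn)
      linarith
    have s2 : β^n * (1 - lam * j) ≤ (1 - lam * j) * ((admWords β n).ncard : ℝ) := by
      rw [mul_comm]
      exact mul_le_mul_of_nonneg_left han h1mlj
    calc ((admWords β m).ncard : ℝ) ≤ β^(m+1)/(β-1) := ham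
    _ = β^n * (β/((β-1)*β^j)) := hsn.symm
    _ ≤ β^n * (1 - lam * j) := s1
    _ ≤ _ := s2
  -- lam * a_n * j ≤ a_n - a_m ≤ j * b_n
  have hfinal : lam * ((admWords β n).ncard : ℝ) * (j:ℝ)
      ≤ ((fullWords β n).ncard : ℝ) * (j:ℝ) := by
    linarith [htel, hamn]
  exact (mul_le_mul_iff_of_pos_right hjpos).1 hfinal
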